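/- arXiv:2510.06979 — 4 statements merged into one kernel-verified Lean document; each statement's English description precedes it below -/
import Mathlib

section
/- Let w : ℝ^{n+1} × (0,∞) → ℝ be smooth and caloric on an open set U ⊆ ℝ^{n+1} × (0,∞), with |∇w(x,t)| ≤ 1 on U, let ε > 0, and set g(x,t) = tanh(w(x,t)/ε). Then g is a sub-solution of the ε-Allen–Cahn equation on {(x,t) ∈ U : w(x,t) > 0}, i.e. ∂ₜg − Δg + ε⁻² f(g) ≤ 0 there, and g is a super-solution on {(x,t) ∈ U : w(x,t) < 0}, i.e. ∂ₜg − Δg + ε⁻² f(g) ≥ 0 there, where f(u) = 2u(u²−1). -/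
open MeasureTheory Set

noncomputable section

/-- `ℝ^{n+1}` as a Euclidean space. -/
abbrev Euc (n : ℕ) := EuclideanSpace ℝ (Fin (n + 1))

/-- The spatial Laplacian: sum of second derivatives in coordinate directions. -/
def lap (n : ℕ) (f : Euc n → ℝ) (x : Euc n) : ℝ :=
  ∑ i : Fin (n + 1),
    fderiv ℝ (fun y => fderiv ℝ f y (EuclideanSpace.single i 1)) x (EuclideanSpace.single i 1)

/-- The Allen–Cahn nonlinearity `f(u) = 2u(u²-1)`, the derivative of `F(u) = ½(1-u²)²`. -/
def acF (u : ℝ) : ℝ := 2 * u * (u ^ 2 - 1)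

lemma tanh_hasDerivAt' (x : ℝ) : HasDerivAt Real.tanh (1 - Real.tanh x ^ 2) x := by
  have h := (Real.hasDerivAt_sinh x).div (Real.hasDerivAt_cosh x) (Real.cosh_pos x).ne'
  have hfun : (fun y => Real.sinh y / Real.cosh y) = Real.tanh := by
    funext y; rw [Real.tanh_eq_sinh_div_cosh]
  have heq : (Real.cosh x * Real.cosh x - Real.sinh x * Real.sinh x) / Real.cosh x ^ 2
      = 1 - Real.tanh x ^ 2 := by
    have hc := (Real.cosh_pos x).ne'
    rw [Real.tanh_eq_sinh_div_cosh]
    field_simp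
  rwa [show (Real.sinh / Real.cosh) = Real.tanh from hfun, heq] at h

lemma tanh_sq_lt_one' (x : ℝ) : Real.tanh x ^ 2 < 1 := by
  rw [Real.tanh_eq_sinh_div_cosh, div_pow, div_lt_one (by positivity)]
  nlinarith [Real.cosh_sq x]

lemma tanh_pos_of_pos' {x : ℝ} (hx : 0 < x) : 0 < Real.tanh x := by
  rw [Real.tanh_eq_sinh_div_cosh]
  exact div_pos (by rwa [Real.sinh_pos_iff]) (Real.cosh_pos x)

lemma tanh_neg_of_neg' {x : ℝ} (hx : x < 0) : Real.tanh x < 0 := by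
  rw [Real.tanh_eq_sinh_div_cosh]
  exact div_neg_of_neg_of_pos (by simpa using Real.sinh_lt_sinh.2 hx) (Real.cosh_pos x)

lemma phi_hasDerivAt (ε : ℝ) (x : ℝ) :
    HasDerivAt (fun s => Real.tanh (s / ε)) ((1 - Real.tanh (x / ε) ^ 2) * ε⁻¹) x := by
  have := (tanh_hasDerivAt' (x / ε)).comp x ((hasDerivAt_id x).div_const ε)
  simpa [one_div, Function.comp_def] using this

lemma phid_hasDerivAt (ε : ℝ) (hε : ε ≠ 0) (x : ℝ) :
    HasDerivAt (fun s => (1 - Real.tanh (s / ε) ^ 2) * ε⁻¹)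
      ((ε ^ 2)⁻¹ * acF (Real.tanh (x / ε))) x := by
  have h1 := ((phi_hasDerivAt ε x).pow 2).const_sub 1
  have h2 := h1.mul_const ε⁻¹
  refine h2.congr_deriv ?_
  simp only [acF]
  field_simp
  ring

lemma key_identity (n : ℕ) (w : Euc n × ℝ → ℝ) (U : Set (Euc n × ℝ))
    (hUopen : IsOpen U)
    (hsmooth : ContDiffOn ℝ ((⊤ : ℕ∞) : WithTop ℕ∞) w U)
    (hcaloric : ∀ p ∈ U, deriv (fun s => w (p.1, s)) p.2 = lap n (fun y => w (y, p.2)) p.1)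
    (hgrad : ∀ p ∈ U, ‖gradient (fun y => w (y, p.2)) p.1‖ ≤ 1)
    (ε : ℝ) (hε : 0 < ε) (p : Euc n × ℝ) (hp : p ∈ U) :
    ∃ S : ℝ, 0 ≤ S ∧ S ≤ 1 ∧
      deriv (fun s => Real.tanh (w (p.1, s) / ε)) p.2
          - lap n (fun y => Real.tanh (w (y, p.2) / ε)) p.1
          + (ε ^ 2)⁻¹ * acF (Real.tanh (w p / ε))
        = (ε ^ 2)⁻¹ * acF (Real.tanh (w p / ε)) * (1 - S) := by
  obtain ⟨x₀, t₀⟩ := p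
  simp only at *
  have hεne : ε ≠ 0 := hε.ne'
  set h : Euc n → ℝ := fun y => w (y, t₀) with hh
  set φd : ℝ → ℝ := fun s => (1 - Real.tanh (s / ε) ^ 2) * ε⁻¹ with hφd
  set V : Set (Euc n) := {y | (y, t₀) ∈ U} with hV
  have hVopen : IsOpen V := hUopen.preimage (continuous_id.prodMk continuous_const)
  have hx₀ : x₀ ∈ V := hp
  have hhsm : ∀ y ∈ V, ContDiffAt ℝ ((⊤ : ℕ∞) : WithTop ℕ∞) h y := by
    intro y hy
    exact (hsmooth.contDiffAt (hUopen.mem_nhds hy)).comp y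
      (ContDiffAt.prodMk contDiffAt_id contDiffAt_const)
  have hdiff : ∀ y ∈ V, DifferentiableAt ℝ h y := fun y hy =>
    (hhsm y hy).differentiableAt (by simp)
  have hG : ∀ y ∈ V, HasFDerivAt (fun z => Real.tanh (w (z, t₀) / ε))
      (φd (h y) • fderiv ℝ h y) y := by
    intro y hy
    exact (phi_hasDerivAt ε (h y)).comp_hasFDerivAt y (hdiff y hy).hasFDerivAt
  have hC2 : ContDiffAt ℝ 2 h x₀ :=
    (hhsm x₀ hx₀).of_le (by exact_mod_cast ENat.natCast_le_of_coe_top_le_withTop le_rfl 2)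
  have hfd1 : ContDiffAt ℝ 1 (fderiv ℝ h) x₀ := hC2.fderiv_right (le_refl 2)
  have hbdiff : ∀ i : Fin (n+1),
      DifferentiableAt ℝ (fun y => fderiv ℝ h y (EuclideanSpace.single i 1)) x₀ := by
    intro i
    exact ((hfd1.clm_apply contDiffAt_const).differentiableAt one_ne_zero)
  have hadiff : HasFDerivAt (fun y => φd (h y))
      (((ε ^ 2)⁻¹ * acF (Real.tanh (h x₀ / ε))) • fderiv ℝ h x₀) x₀ :=
    (phid_hasDerivAt ε hεne (h x₀)).comp_hasFDerivAt x₀ (hdiff x₀ hx₀).hasFDerivAt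
  have lapeq : lap n (fun y => Real.tanh (w (y, t₀) / ε)) x₀
      = ((ε ^ 2)⁻¹ * acF (Real.tanh (h x₀ / ε)))
          * (∑ i : Fin (n+1), (fderiv ℝ h x₀ (EuclideanSpace.single i 1)) ^ 2)
        + φd (h x₀) * lap n h x₀ := by
    rw [lap, Finset.mul_sum, lap, Finset.mul_sum, ← Finset.sum_add_distrib]
    apply Finset.sum_congr rfl
    intro i _
    have hevi : (fun y => fderiv ℝ (fun z => Real.tanh (w (z, t₀) / ε)) y
          (EuclideanSpace.single i 1))
        =ᶠ[nhds x₀] (fun y => φd (h y) * fderiv ℝ h y (EuclideanSpace.single i 1)) := by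
      filter_upwards [hVopen.mem_nhds hx₀] with y hy
      rw [(hG y hy).fderiv]
      simp
    rw [hevi.fderiv_eq]
    rw [fderiv_fun_mul (hadiff.differentiableAt) (hbdiff i)]
    simp only [ContinuousLinearMap.add_apply, ContinuousLinearMap.smul_apply, smul_eq_mul,
      hadiff.fderiv]
    ring
  have hu : DifferentiableAt ℝ (fun s => w (x₀, s)) t₀ := by
    have := (hsmooth.contDiffAt (hUopen.mem_nhds hp)).comp t₀
      (ContDiffAt.prodMk contDiffAt_const contDiffAt_id)
    exact this.differentiableAt (by simp)
  have hderivt : deriv (fun s => Real.tanh (w (x₀, s) / ε)) t₀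
      = φd (w (x₀, t₀)) * deriv (fun s => w (x₀, s)) t₀ := by
    have := (phi_hasDerivAt ε (w (x₀, t₀))).comp t₀ hu.hasDerivAt
    exact this.deriv
  have hgradeq : ∀ v : Euc n, fderiv ℝ h x₀ v = inner ℝ (gradient h x₀) v := by
    intro v
    rw [gradient]
    exact (InnerProductSpace.toDual_symm_apply).symm
  set S : ℝ := ∑ i : Fin (n+1), (fderiv ℝ h x₀ (EuclideanSpace.single i 1)) ^ 2 with hS
  have hSval : S = ‖gradient h x₀‖ ^ 2 := by
    rw [hS]
    have hco : ∀ i : Fin (n+1), fderiv ℝ h x₀ (EuclideanSpace.single i 1)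
        = gradient h x₀ i := by
      intro i
      rw [hgradeq, EuclideanSpace.inner_single_right]
      simp
    simp_rw [hco]
    rw [EuclideanSpace.norm_eq, Real.sq_sqrt (by positivity)]
    simp [sq_abs]
  have hS1 : S ≤ 1 := by
    rw [hSval]
    have := hgrad (x₀, t₀) hp
    nlinarith [norm_nonneg (gradient h x₀)]
  have hS0 : 0 ≤ S := Finset.sum_nonneg fun i _ => sq_nonneg _
  refine ⟨S, hS0, hS1, ?_⟩
  rw [hderivt, lapeq, hcaloric (x₀, t₀) hp]
  simp only [hh, hφd]
  ring

theorem stmt4 (n : ℕ) (w : Euc n × ℝ → ℝ) (U : Set (Euc n × ℝ))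
    (hUopen : IsOpen U) (hUt : ∀ p ∈ U, 0 < p.2)
    (hsmooth : ContDiffOn ℝ ((⊤ : ℕ∞) : WithTop ℕ∞) w U)
    (hcaloric : ∀ p ∈ U, deriv (fun s => w (p.1, s)) p.2 = lap n (fun y => w (y, p.2)) p.1)
    (hgrad : ∀ p ∈ U, ‖gradient (fun y => w (y, p.2)) p.1‖ ≤ 1)
    (ε : ℝ) (hε : 0 < ε) :
    (∀ p ∈ U, 0 < w p →
      deriv (fun s => Real.tanh (w (p.1, s) / ε)) p.2
          - lap n (fun y => Real.tanh (w (y, p.2) / ε)) p.1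
          + (ε ^ 2)⁻¹ * acF (Real.tanh (w p / ε)) ≤ 0) ∧
    (∀ p ∈ U, w p < 0 →
      0 ≤ deriv (fun s => Real.tanh (w (p.1, s) / ε)) p.2
          - lap n (fun y => Real.tanh (w (y, p.2) / ε)) p.1
          + (ε ^ 2)⁻¹ * acF (Real.tanh (w p / ε))) := by
  constructor
  · intro p hp hw
    obtain ⟨S, hS0, hS1, heq⟩ :=
      key_identity n w U hUopen hsmooth hcaloric hgrad ε hε p hp
    rw [heq]
    have hg : 0 < Real.tanh (w p / ε) := tanh_pos_of_pos' (div_pos hw hε)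
    have hg2 : Real.tanh (w p / ε) ^ 2 < 1 := tanh_sq_lt_one' _
    have hacF : acF (Real.tanh (w p / ε)) ≤ 0 := by
      unfold acF; nlinarith
    have h1 : (ε ^ 2)⁻¹ * acF (Real.tanh (w p / ε)) ≤ 0 :=
      mul_nonpos_of_nonneg_of_nonpos (by positivity) hacF
    exact mul_nonpos_of_nonpos_of_nonneg h1 (by linarith)
  · intro p hp hw
    obtain ⟨S, hS0, hS1, heq⟩ :=
      key_identity n w U hUopen hsmooth hcaloric hgrad ε hε p hp
    rw [heq]
    have hg : Real.tanh (w p / ε) < 0 := tanh_neg_of_neg' (div_neg_of_neg_of_pos hw hε)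
    have hg2 : Real.tanh (w p / ε) ^ 2 < 1 := tanh_sq_lt_one' _
    have hacF : 0 ≤ acF (Real.tanh (w p / ε)) := by
      unfold acF; nlinarith
    exact mul_nonneg (mul_nonneg (by positivity) hacF) (by linarith)

end
end

section
/- Let w : ℝ^{n+1} × (0,∞) → ℝ be smooth and caloric on an open set U ⊆ ℝ^{n+1} × (0,∞), let α > 0, and set ψ(x,t) = t⁻¹ exp(−α w(x,t)²/t). Then on U one has the identity ∂ₜψ − Δψ = [ (2α|∇w|² − 1)/t² + α w² (1 − 4α|∇w|²)/t³ ] · exp(−α w²/t), where ∇, Δ are the spatial gradient and Laplacian. -/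
open MeasureTheory Set

noncomputable section

lemma norm_gradient_sq (n : ℕ) (f : Euc n → ℝ) (x : Euc n) :
    ‖gradient f x‖ ^ 2
      = ∑ i : Fin (n + 1), (fderiv ℝ f x (EuclideanSpace.single i 1)) ^ 2 := by
  have h : ∀ i, gradient f x i = fderiv ℝ f x (EuclideanSpace.single i 1) := by
    intro i
    have h1 := (InnerProductSpace.toDual ℝ (Euc n)).apply_symm_apply (fderiv ℝ f x)
    have h2 : inner ℝ (gradient f x) (EuclideanSpace.single i 1)
        = fderiv ℝ f x (EuclideanSpace.single i 1) := by
      rw [gradient] at *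
      rw [← h1]
      simp [InnerProductSpace.toDual_apply_apply]
    rw [← h2, EuclideanSpace.inner_single_right]
    simp
  rw [EuclideanSpace.norm_eq, Real.sq_sqrt (by positivity)]
  simp [h]

theorem stmt8 (n : ℕ) (w : Euc n × ℝ → ℝ) (U : Set (Euc n × ℝ))
    (hUopen : IsOpen U) (hUt : ∀ p ∈ U, 0 < p.2)
    (hsmooth : ContDiffOn ℝ ((⊤ : ℕ∞) : WithTop ℕ∞) w U)
    (hcaloric : ∀ p ∈ U, deriv (fun s => w (p.1, s)) p.2 = lap n (fun y => w (y, p.2)) p.1)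
    (α : ℝ) (hα : 0 < α) :
    ∀ p ∈ U,
      deriv (fun s => s⁻¹ * Real.exp (-α * (w (p.1, s)) ^ 2 / s)) p.2
          - lap n (fun y => p.2⁻¹ * Real.exp (-α * (w (y, p.2)) ^ 2 / p.2)) p.1
        = ((2 * α * ‖gradient (fun y => w (y, p.2)) p.1‖ ^ 2 - 1) / p.2 ^ 2
            + α * (w p) ^ 2 * (1 - 4 * α * ‖gradient (fun y => w (y, p.2)) p.1‖ ^ 2) / p.2 ^ 3)
            * Real.exp (-α * (w p) ^ 2 / p.2) := by
  rintro ⟨x, t⟩ hp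
  have ht : 0 < t := hUt _ hp
  have ht' : t ≠ 0 := ht.ne'
  -- time derivative
  have hw : DifferentiableAt ℝ w (x, t) :=
    (hsmooth.contDiffAt (hUopen.mem_nhds hp)).differentiableAt (by simp)
  have hu0 : DifferentiableAt ℝ (fun s => w (x, s)) t :=
    hw.comp t ((differentiableAt_const x).prodMk differentiableAt_id)
  set wt := deriv (fun s => w (x, s)) t with hwtdef
  have hu : HasDerivAt (fun s => w (x, s)) wt t := hu0.hasDerivAt
  set a := w (x, t) with ha
  set E := Real.exp (-α * a ^ 2 / t) with hE
  have h1 : HasDerivAt (fun s => -α * (w (x, s) * w (x, s)) / s)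
      ((-α * (wt * a + a * wt) * t - -α * (a * a) * 1) / t ^ 2) t :=
    ((hu.mul hu).const_mul (-α)).div (hasDerivAt_id t) ht'
  have h2 : HasDerivAt (fun s => -α * (w (x, s)) ^ 2 / s)
      ((-α * (wt * a + a * wt) * t - -α * (a * a) * 1) / t ^ 2) t := by
    convert h1 using 2 with s
    ring
  have h3 : HasDerivAt (fun s => s⁻¹ * Real.exp (-α * (w (x, s)) ^ 2 / s))
      (-(t ^ 2)⁻¹ * E
        + t⁻¹ * (E * ((-α * (wt * a + a * wt) * t - -α * (a * a) * 1) / t ^ 2))) t := by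
    exact (hasDerivAt_inv ht').mul h2.exp
  have hT : deriv (fun s => s⁻¹ * Real.exp (-α * (w (x, s)) ^ 2 / s)) t
      = -(t ^ 2)⁻¹ * E
        + t⁻¹ * (E * ((-α * (wt * a + a * wt) * t - -α * (a * a) * 1) / t ^ 2)) := h3.deriv
  -- spatial part
  set f : Euc n → ℝ := fun y => w (y, t) with hfdef
  set V : Set (Euc n) := {y | (y, t) ∈ U} with hVdef
  have hVopen : IsOpen V := hUopen.preimage (continuous_id.prodMk continuous_const)
  have hxV : x ∈ V := hp
  have hfC : ContDiffOn ℝ ((⊤ : ℕ∞) : WithTop ℕ∞) f V :=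
    hsmooth.comp ((contDiff_id.prodMk contDiff_const).contDiffOn) (fun y hy => hy)
  have hfd : ∀ y ∈ V, DifferentiableAt ℝ f y := fun y hy =>
    (hfC.contDiffAt (hVopen.mem_nhds hy)).differentiableAt (by simp)
  have hf'C : ContDiffOn ℝ ((⊤ : ℕ∞) : WithTop ℕ∞) (fderiv ℝ f) V :=
    hfC.fderiv_of_isOpen hVopen (by exact_mod_cast le_top)
  have hDif : ∀ (v : Euc n), DifferentiableAt ℝ (fun y => fderiv ℝ f y v) x := by
    intro v
    exact (ContinuousLinearMap.apply ℝ ℝ v).differentiableAt.comp x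
      ((hf'C.contDiffAt (hVopen.mem_nhds hxV)).differentiableAt (by simp))
  have hq : ∀ y ∈ V, HasFDerivAt (fun z => -α * f z ^ 2 / t)
      ((-α * (2 * f y) / t) • fderiv ℝ f y) y := by
    intro y hy
    have hfy := (hfd y hy).hasFDerivAt
    have : HasFDerivAt (fun y => t⁻¹ * (-α * (f y * f y)))
        (t⁻¹ • -α • (f y • fderiv ℝ f y + f y • fderiv ℝ f y)) y :=
        ((hfy.mul hfy).const_mul (-α)).const_mul t⁻¹
    convert this using 1
    · funext z; ring
    · refine ContinuousLinearMap.ext fun v => ?_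
      simp only [ContinuousLinearMap.smul_apply, ContinuousLinearMap.add_apply, smul_eq_mul]
      ring
  have hF : ∀ y ∈ V, HasFDerivAt (fun z => t⁻¹ * Real.exp (-α * f z ^ 2 / t))
      (t⁻¹ • Real.exp (-α * f y ^ 2 / t) • (-α * (2 * f y) / t) • fderiv ℝ f y) y :=
    fun y hy => ((hq y hy).exp).const_mul t⁻¹
  set Dx := fderiv ℝ f x with hDx
  -- per-coordinate second derivative
  have hsummand : ∀ i : Fin (n + 1),
      fderiv ℝ (fun y => fderiv ℝ (fun z => t⁻¹ * Real.exp (-α * (w (z, t)) ^ 2 / t)) y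
          (EuclideanSpace.single i 1)) x (EuclideanSpace.single i 1)
        = t⁻¹ * (E * ((-α * (2 * a) / t)
              * fderiv ℝ (fun y => fderiv ℝ f y (EuclideanSpace.single i 1)) x
                  (EuclideanSpace.single i 1)
            + Dx (EuclideanSpace.single i 1)
              * (t⁻¹ * (-α * (2 * Dx (EuclideanSpace.single i 1))))))
          + t⁻¹ * ((-α * (2 * a) / t) * Dx (EuclideanSpace.single i 1)
              * (E * ((-α * (2 * a) / t) * Dx (EuclideanSpace.single i 1)))) := by
    intro i
    set e : Euc n := EuclideanSpace.single i 1 with he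
    have heq : (fun y => fderiv ℝ (fun z => t⁻¹ * Real.exp (-α * (w (z, t)) ^ 2 / t)) y e)
        =ᶠ[nhds x] fun y =>
          t⁻¹ * (Real.exp (-α * f y ^ 2 / t) * ((-α * (2 * f y) / t) * fderiv ℝ f y e)) := by
      filter_upwards [hVopen.mem_nhds hxV] with y hy
      rw [(hF y hy).fderiv]
      simp only [ContinuousLinearMap.smul_apply, smul_eq_mul]
    rw [heq.fderiv_eq]
    -- differentiate the explicit formula
    have hfx := (hfd x hxV).hasFDerivAt
    have hDifx := (hDif e).hasFDerivAt
    have hA : HasFDerivAt (fun y => -α * (2 * f y) / t)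
        ((-α * 2 / t) • Dx) x := by
      have : HasFDerivAt (fun y => t⁻¹ * (-α * (2 * f y)))
          (t⁻¹ • -α • (2 : ℝ) • fderiv ℝ f x) x :=
          ((hfx.const_mul 2).const_mul (-α)).const_mul t⁻¹
      convert this using 1
      · funext z; ring
      · refine ContinuousLinearMap.ext fun v => ?_
        simp only [ContinuousLinearMap.smul_apply, smul_eq_mul]
        ring
    have hmul := hA.mul hDifx
    have hexp := (hq x hxV).exp
    have hphi : HasFDerivAt
        (fun y => t⁻¹ * (Real.exp (-α * f y ^ 2 / t) * (-α * (2 * f y) / t * fderiv ℝ f y e)))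
        (t⁻¹ • (Real.exp (-α * f x ^ 2 / t) • ((-α * (2 * f x) / t) •
          fderiv ℝ (fun y => fderiv ℝ f y e) x + fderiv ℝ f x e • (-α * 2 / t) • Dx)
          + ((-α * (2 * f x) / t) * fderiv ℝ f x e) •
            Real.exp (-α * f x ^ 2 / t) • (-α * (2 * f x) / t) • fderiv ℝ f x)) x :=
      (hexp.mul hmul).const_mul t⁻¹
    rw [hphi.fderiv]
    simp only [ContinuousLinearMap.smul_apply, ContinuousLinearMap.add_apply, smul_eq_mul]
    ring
  -- sum up the Laplacian
  have hL : lap n (fun z => t⁻¹ * Real.exp (-α * (w (z, t)) ^ 2 / t)) x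
      = t⁻¹ * (E * ((-α * (2 * a) / t) * wt))
        + t⁻¹ * (E * (t⁻¹ * (-α * 2))) * (‖gradient f x‖ ^ 2)
        + t⁻¹ * ((-α * (2 * a) / t) ^ 2 * E) * (‖gradient f x‖ ^ 2) := by
    have hcal := hcaloric (x, t) hp
    rw [norm_gradient_sq]
    rw [lap]
    rw [Finset.sum_congr rfl (fun i _ => hsummand i)]
    rw [show (∑ i : Fin (n + 1),
        (t⁻¹ * (E * ((-α * (2 * a) / t)
            * fderiv ℝ (fun y => fderiv ℝ f y (EuclideanSpace.single i 1)) x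
                (EuclideanSpace.single i 1)
          + Dx (EuclideanSpace.single i 1)
            * (t⁻¹ * (-α * (2 * Dx (EuclideanSpace.single i 1))))))
          + t⁻¹ * ((-α * (2 * a) / t) * Dx (EuclideanSpace.single i 1)
              * (E * ((-α * (2 * a) / t) * Dx (EuclideanSpace.single i 1)))))) =
        ∑ i : Fin (n + 1),
        (t⁻¹ * (E * (-α * (2 * a) / t))
            * fderiv ℝ (fun y => fderiv ℝ f y (EuclideanSpace.single i 1)) x
                (EuclideanSpace.single i 1)
          + (t⁻¹ * (E * (t⁻¹ * (-α * 2))) + t⁻¹ * ((-α * (2 * a) / t) ^ 2 * E))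
              * (Dx (EuclideanSpace.single i 1)) ^ 2)
      from Finset.sum_congr rfl (fun i _ => by ring)]
    rw [Finset.sum_add_distrib, ← Finset.mul_sum, ← Finset.mul_sum]
    have : (∑ i : Fin (n + 1),
        fderiv ℝ (fun y => fderiv ℝ f y (EuclideanSpace.single i 1)) x
          (EuclideanSpace.single i 1)) = wt := by
      rw [hwtdef, hcal, lap]
    rw [this]
    ring
  -- put it together
  simp only [hT, hL]
  field_simp
  ring
end
end

section
/- Let w : ℝ^{n+1} × (0,∞) → ℝ be smooth and caloric on an open set U ⊆ ℝ^{n+1} × (0,∞) with |∇w(x,t)| ≤ 1 on U, and set ψ(x,t) = t⁻¹ exp(−w(x,t)²/(6t)). Then ψ is super-caloric on {(x,t) ∈ U : w(x,t)² ≥ 18t}, i.e. ∂ₜψ − Δψ ≥ 0 there; in particular this holds on {(x,t) ∈ U : |w(x,t)| ≥ 5√t}. -/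
open MeasureTheory Set

noncomputable section

theorem stmt9 (n : ℕ) (w : Euc n × ℝ → ℝ) (U : Set (Euc n × ℝ))
    (hUopen : IsOpen U) (hUt : ∀ p ∈ U, 0 < p.2)
    (hsmooth : ContDiffOn ℝ ((⊤ : ℕ∞) : WithTop ℕ∞) w U)
    (hcaloric : ∀ p ∈ U, deriv (fun s => w (p.1, s)) p.2 = lap n (fun y => w (y, p.2)) p.1)
    (hgrad : ∀ p ∈ U, ‖gradient (fun y => w (y, p.2)) p.1‖ ≤ 1) :
    (∀ p ∈ U, 18 * p.2 ≤ (w p) ^ 2 →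
      0 ≤ deriv (fun s => s⁻¹ * Real.exp (-(w (p.1, s)) ^ 2 / (6 * s))) p.2
          - lap n (fun y => p.2⁻¹ * Real.exp (-(w (y, p.2)) ^ 2 / (6 * p.2))) p.1) ∧
    (∀ p ∈ U, 5 * Real.sqrt p.2 ≤ |w p| →
      0 ≤ deriv (fun s => s⁻¹ * Real.exp (-(w (p.1, s)) ^ 2 / (6 * s))) p.2
          - lap n (fun y => p.2⁻¹ * Real.exp (-(w (y, p.2)) ^ 2 / (6 * p.2))) p.1) := by
  have key : ∀ p ∈ U, 18 * p.2 ≤ (w p) ^ 2 →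
      0 ≤ deriv (fun s => s⁻¹ * Real.exp (-(w (p.1, s)) ^ 2 / (6 * s))) p.2
          - lap n (fun y => p.2⁻¹ * Real.exp (-(w (y, p.2)) ^ 2 / (6 * p.2))) p.1 := by
    rintro ⟨x, t⟩ hp hw
    dsimp only at hw ⊢
    have ht : 0 < t := hUt _ hp
    -- smoothness of the slice functions
    have hgc : ∀ y : Euc n, (y, t) ∈ U → ContDiffAt ℝ 2 (fun z => w (z, t)) y := by
      intro y hy
      have h1 : ContDiffAt ℝ ((⊤ : ℕ∞) : WithTop ℕ∞) w (y, t) :=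
        hsmooth.contDiffAt (hUopen.mem_nhds hy)
      have h2 : ContDiffAt ℝ ((⊤ : ℕ∞) : WithTop ℕ∞) (fun z : Euc n => w (z, t)) y :=
        h1.comp y ((contDiff_id.prodMk contDiff_const).contDiffAt)
      exact h2.of_le (WithTop.coe_le_coe.mpr le_top)
    have hGdiff : ∀ y : Euc n, (y, t) ∈ U → DifferentiableAt ℝ (fun z => w (z, t)) y :=
      fun y hy => (hgc y hy).differentiableAt (by norm_num)
    -- one-dimensional profile functions
    set q : ℝ → ℝ := fun a => t⁻¹ * (Real.exp (-a ^ 2 / (6 * t)) * (-(2 * a) / (6 * t))) with hqdef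
    have hu : ∀ a : ℝ, HasDerivAt (fun a : ℝ => -a ^ 2 / (6 * t)) (-(2 * a) / (6 * t)) a := by
      intro a
      simpa using (hasDerivAt_pow 2 a).neg.div_const (6 * t)
    have hQd : ∀ a : ℝ, HasDerivAt (fun a : ℝ => t⁻¹ * Real.exp (-a ^ 2 / (6 * t))) (q a) a := by
      intro a
      exact ((hu a).exp).const_mul t⁻¹
    have hv : ∀ a : ℝ, HasDerivAt (fun a : ℝ => -(2 * a) / (6 * t)) (-2 / (6 * t)) a := by
      intro a
      simpa using ((hasDerivAt_id a).const_mul 2).neg.div_const (6 * t)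
    set q' : ℝ → ℝ := fun a => t⁻¹ *
      ((Real.exp (-a ^ 2 / (6 * t)) * (-(2 * a) / (6 * t))) * (-(2 * a) / (6 * t))
        + Real.exp (-a ^ 2 / (6 * t)) * (-2 / (6 * t))) with hq'def
    have hqd : ∀ a : ℝ, HasDerivAt q (q' a) a := by
      intro a
      exact (((hu a).exp.mul (hv a))).const_mul t⁻¹
    -- spatial first derivative of F on a neighborhood
    have hF : ∀ y : Euc n, (y, t) ∈ U →
        HasFDerivAt (fun z => t⁻¹ * Real.exp (-(w (z, t)) ^ 2 / (6 * t)))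
          (q (w (y, t)) • fderiv ℝ (fun z => w (z, t)) y) y := by
      intro y hy
      exact (hQd (w (y, t))).comp_hasFDerivAt (f := fun z => w (z, t)) y (hGdiff y hy).hasFDerivAt
    have hmemU : ∀ᶠ y in nhds x, (y, t) ∈ U :=
      (hUopen.preimage (continuous_id.prodMk continuous_const)).mem_nhds hp
    have hFev : ∀ i : Fin (n + 1),
        (fun y => fderiv ℝ (fun z => t⁻¹ * Real.exp (-(w (z, t)) ^ 2 / (6 * t))) y
            (EuclideanSpace.single i 1))
        =ᶠ[nhds x] (fun y => q (w (y, t)) *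
            fderiv ℝ (fun z => w (z, t)) y (EuclideanSpace.single i 1)) := by
      intro i
      filter_upwards [hmemU] with y hy
      rw [(hF y hy).fderiv]
      simp
    -- second spatial derivatives
    have hfdg : ContDiffAt ℝ 1 (fderiv ℝ (fun z => w (z, t))) x :=
      (hgc x hp).fderiv_right (le_refl 2)
    have hGi : ∀ i : Fin (n + 1), DifferentiableAt ℝ
        (fun y => fderiv ℝ (fun z => w (z, t)) y (EuclideanSpace.single i 1)) x :=
      fun i => (hfdg.clm_apply contDiffAt_const).differentiableAt one_ne_zero
    have hqfd : HasFDerivAt (fun y => q (w (y, t)))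
        (q' (w (x, t)) • fderiv ℝ (fun z => w (z, t)) x) x :=
      (hqd (w (x, t))).comp_hasFDerivAt (f := fun z => w (z, t)) x (hGdiff x hp).hasFDerivAt
    set S : ℝ := ∑ i : Fin (n + 1),
      (fderiv ℝ (fun z => w (z, t)) x (EuclideanSpace.single i 1)) ^ 2 with hSdef
    have hlap : lap n (fun z => t⁻¹ * Real.exp (-(w (z, t)) ^ 2 / (6 * t))) x
        = q (w (x, t)) * lap n (fun z => w (z, t)) x + q' (w (x, t)) * S := by
      simp only [lap, hSdef]
      rw [Finset.mul_sum, Finset.mul_sum, ← Finset.sum_add_distrib]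
      refine Finset.sum_congr rfl (fun i _ => ?_)
      rw [(hFev i).fderiv_eq]
      have hmul := hqfd.fun_mul (hGi i).hasFDerivAt
      rw [hmul.fderiv]
      simp only [ContinuousLinearMap.add_apply, ContinuousLinearMap.smul_apply, smul_eq_mul]
      ring
    -- time derivative
    have hfdiff : DifferentiableAt ℝ (fun s => w (x, s)) t := by
      have h1 : ContDiffAt ℝ ((⊤ : ℕ∞) : WithTop ℕ∞) w (x, t) :=
        hsmooth.contDiffAt (hUopen.mem_nhds hp)
      exact ((h1.comp t ((contDiff_const.prodMk contDiff_id).contDiffAt)).of_le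
        (WithTop.coe_le_coe.mpr le_top)).differentiableAt one_ne_zero
    set f' : ℝ := deriv (fun s => w (x, s)) t with hf'def
    have hfder : HasDerivAt (fun s => w (x, s)) f' t := hfdiff.hasDerivAt
    have hnum : HasDerivAt (fun s => -(w (x, s)) ^ 2) (-(2 * (w (x, t)) * f')) t := by
      have := (hfder.pow 2).neg
      simpa [mul_comm, mul_assoc, pow_one, Pi.neg_def] using this
    have hden : HasDerivAt (fun s : ℝ => 6 * s) 6 t := by
      simpa using (hasDerivAt_id t).const_mul 6
    have hA : HasDerivAt (fun s => -(w (x, s)) ^ 2 / (6 * s))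
        ((-(2 * (w (x, t)) * f') * (6 * t) - (-(w (x, t)) ^ 2) * 6) / (6 * t) ^ 2) t :=
      hnum.div hden (by positivity)
    have hh : HasDerivAt (fun s => s⁻¹ * Real.exp (-(w (x, s)) ^ 2 / (6 * s)))
        ((-(t ^ 2)⁻¹) * Real.exp (-(w (x, t)) ^ 2 / (6 * t))
          + t⁻¹ * (Real.exp (-(w (x, t)) ^ 2 / (6 * t))
            * ((-(2 * (w (x, t)) * f') * (6 * t) - (-(w (x, t)) ^ 2) * 6) / (6 * t) ^ 2))) t :=
      (hasDerivAt_inv ht.ne').mul hA.exp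
    -- gradient bound
    have hS1 : S ≤ 1 := by
      have hgx := (hGdiff x hp).hasGradientAt
      have hfd : fderiv ℝ (fun z => w (z, t)) x
          = (InnerProductSpace.toDual ℝ (Euc n)) (gradient (fun z => w (z, t)) x) :=
        hgx.hasFDerivAt.fderiv
      have hval : ∀ i : Fin (n + 1),
          fderiv ℝ (fun z => w (z, t)) x (EuclideanSpace.single i 1)
            = gradient (fun z => w (z, t)) x i := by
        intro i
        rw [hfd]
        simp only [InnerProductSpace.toDual_apply_apply, EuclideanSpace.inner_single_right]
        simp
      have hnorm := hgrad (x, t) hp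
      dsimp only at hnorm
      have h2 : S = ‖gradient (fun z => w (z, t)) x‖ ^ 2 := by
        rw [hSdef, EuclideanSpace.norm_eq, Real.sq_sqrt (by positivity)]
        refine Finset.sum_congr rfl (fun i _ => ?_)
        rw [hval i]
        simp [Real.norm_eq_abs, sq_abs]
      rw [h2]
      nlinarith [norm_nonneg (gradient (fun z => w (z, t)) x)]
    have hS0 : 0 ≤ S := by
      rw [hSdef]; positivity
    -- assemble
    rw [hh.deriv, hlap]
    have hcal := hcaloric (x, t) hp
    dsimp only at hcal
    rw [← hf'def] at hcal
    rw [← hcal]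
    have hW : 18 * t ≤ (w (x, t)) ^ 2 := hw
    have he : (0:ℝ) < Real.exp (-(w (x, t)) ^ 2 / (6 * t)) := Real.exp_pos _
    set W := w (x, t) with hWdef
    set e := Real.exp (-W ^ 2 / (6 * t)) with hedef
    have heq : (-(t ^ 2)⁻¹) * e + t⁻¹ * (e * ((-(2 * W * f') * (6 * t) - (-W ^ 2) * 6) / (6 * t) ^ 2))
        - (q W * f' + q' W * S)
        = e * (t ^ 3)⁻¹ * (W ^ 2 / 6 - t + S * (t / 3) - W ^ 2 * S / 9) := by
      rw [hqdef, hq'def]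
      beta_reduce
      rw [← hedef]
      field_simp
      ring
    rw [heq]
    have h1 : 0 ≤ (1 - S) * W ^ 2 := mul_nonneg (by linarith) (sq_nonneg W)
    have h2 : 0 ≤ S * t := mul_nonneg hS0 ht.le
    have h3 : (0:ℝ) ≤ e * (t ^ 3)⁻¹ := by positivity
    nlinarith [mul_nonneg h3 (by nlinarith : (0:ℝ) ≤ W ^ 2 / 6 - t + S * (t / 3) - W ^ 2 * S / 9)]
  refine ⟨key, fun p hp h5 => key p hp ?_⟩
  have ht : 0 < p.2 := hUt p hp
  nlinarith [mul_self_le_mul_self (by positivity : (0:ℝ) ≤ 5 * Real.sqrt p.2) h5,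
    Real.sq_sqrt ht.le, sq_abs (w p), Real.sqrt_nonneg p.2]

end
end

section
/- Let M ⊂ ℝ^{n+1} be a nonempty compact set, let d(x) = dist(x,M), and suppose there is A > 0 such that H^n({x : d(x) = s}) ≤ A·max(1, s^n) for almost every s > 0. Then there exists a constant C > 0 depending only on n such that for every t ∈ (0,1), ∫_{ℝ^{n+1} \ M} t⁻¹ exp( −d(x)²/(3t) ) dx ≤ C A / √t. -/
open MeasureTheory Set

noncomputable section

set_option maxHeartbeats 2000000

section StmtAux
open Metric
open scoped RealInnerProductSpace ENNReal

namespace Stmt18Aux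

def c1 (n : ℕ) : ℝ := (1 / (2 * (Real.sqrt n + 1))) ^ n

lemma c1_pos (n : ℕ) : 0 < c1 n := by
  have h : (0:ℝ) < Real.sqrt n + 1 := by positivity
  exact pow_pos (by positivity) n

def v1 (n : ℕ) : ℝ := (volume (Metric.ball (0 : Euc n) 1)).toReal

lemma v1_pos (n : ℕ) : 0 < v1 n :=
  ENNReal.toReal_pos (measure_ball_pos volume 0 one_pos).ne' measure_ball_lt_top.ne

lemma v1_eq (n : ℕ) : volume (Metric.ball (0 : Euc n) 1) = ENNReal.ofReal (v1 n) :=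
  (ENNReal.ofReal_toReal measure_ball_lt_top.ne).symm

def K2 (n : ℕ) : ℝ := 8 ^ (n+1) * v1 n / c1 n

lemma K2_pos (n : ℕ) : 0 < K2 n := by
  have := v1_pos n; have := c1_pos n
  have h8 : (0:ℝ) < 8 ^ (n+1) := by positivity
  exact div_pos (mul_pos h8 (v1_pos n)) (c1_pos n)


lemma norm_orth {E : Type*} [NormedAddCommGroup E] [InnerProductSpace ℝ E]
    {e w : E} (he : ‖e‖ = 1) (hw : ⟪e, w⟫ = 0) (a : ℝ) :
    ‖a • e + w‖ = Real.sqrt (a ^ 2 + ‖w‖ ^ 2) := by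
  have h2 : ‖a • e + w‖ ^ 2 = a ^ 2 + ‖w‖ ^ 2 := by
    rw [norm_add_sq_real]
    rw [real_inner_smul_left, hw, norm_smul, he]
    simp [mul_pow, sq_abs]
  rw [← h2, Real.sqrt_sq (norm_nonneg _)]

lemma density (n : ℕ) {M : Set (Euc n)} (hMne : M.Nonempty) (hM : IsCompact M)
    {s : ℝ} (hs : 0 < s) {x : Euc n}
    (hx1 : 2 * s < Metric.infDist x M) (hx2 : Metric.infDist x M ≤ 3 * s) :
    ENNReal.ofReal (c1 n * s ^ n)
      ≤ μH[(n : ℝ)] ({y : Euc n | Metric.infDist y M = s} ∩ Metric.closedBall x (4 * s)) := by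
  haveI : Fact (Module.finrank ℝ (Euc n) = n + 1) := ⟨by simp⟩
  set r := Metric.infDist x M with hr
  have hrpos : 0 < r := lt_trans (by positivity) hx1
  obtain ⟨p, hpM, hpd⟩ := hM.exists_infDist_eq_dist hMne x
  have hxp : ‖x - p‖ = r := by rw [← dist_eq_norm, ← hpd]
  set e : Euc n := r⁻¹ • (x - p) with he_def
  have he : ‖e‖ = 1 := by
    rw [he_def, norm_smul, hxp, norm_inv, Real.norm_eq_abs, abs_of_pos hrpos]
    field_simp
  have hene : e ≠ 0 := by
    intro h; rw [h, norm_zero] at he; norm_num at he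
  have hre : x = p + r • e := by
    rw [he_def, smul_smul, mul_inv_cancel₀ hrpos.ne', one_smul]
    abel
  set Ko := (Submodule.span ℝ {e})ᗮ with hKo
  set J := (OrthonormalBasis.fromOrthogonalSpanSingleton (𝕜 := ℝ) n hene).repr with hJ
  set P := Ko.orthogonalProjectionOnto with hP
  have hPe : P e = 0 := by
    apply Submodule.orthogonalProjectionOnto_apply_of_mem_orthogonal
    rw [hKo, Submodule.orthogonal_orthogonal]
    exact Submodule.mem_span_singleton_self e
  set Φ : Euc n → (Fin n → ℝ) := fun v => WithLp.equiv 2 (Fin n → ℝ) (J (P v)) with hΦdef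
  have hΦlip : LipschitzWith 1 Φ := by
    have l1 : LipschitzWith 1 (fun v : Euc n => (P v : ↥Ko)) := by
      apply LipschitzWith.of_dist_le_mul
      intro a b
      rw [NNReal.coe_one, one_mul, dist_eq_norm, dist_eq_norm, ← map_sub]
      calc ‖P (a - b)‖ ≤ ‖P‖ * ‖a - b‖ := (P : Euc n →L[ℝ] ↥Ko).le_opNorm _
        _ ≤ 1 * ‖a - b‖ := by
            gcongr; exact Submodule.orthogonalProjectionOnto_norm_le Ko
        _ = ‖a - b‖ := one_mul _
    have l2 := (PiLp.lipschitzWith_ofLp 2 (fun _ : Fin n => ℝ))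
    have h := l2.comp ((J.isometry.lipschitz).comp l1)
    rw [one_mul, one_mul] at h
    exact h
  set z : Euc n := p + s • e with hz
  set ρ : ℝ := s / 4 / (Real.sqrt n + 1) with hρ
  have hsq : (0:ℝ) < Real.sqrt n + 1 := by positivity
  have hρpos : 0 < ρ := by positivity
  set L := {y : Euc n | Metric.infDist y M = s} with hL
  set S := L ∩ Metric.closedBall x (4 * s) with hS
  have key : ball (Φ z) ρ ⊆ Φ '' S := by
    intro y hy
    set w' : EuclideanSpace ℝ (Fin n) := (WithLp.equiv 2 (Fin n → ℝ)).symm y - J (P z) with hw'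
    have hw'norm : ‖w'‖ < s / 4 := by
      have hdist : dist y (Φ z) < ρ := mem_ball.1 hy
      have hcomp : ∀ i, |w' i| ≤ dist y (Φ z) := by
        intro i
        have h1 : w' i = (y - Φ z) i := by
          simp [hw', hΦdef]
        rw [h1, dist_eq_norm]
        have := norm_le_pi_norm (y - Φ z) i
        simpa using (dist_eq_norm y (Φ z) ▸ this)
      have hn2 : ‖w'‖ ≤ Real.sqrt n * ρ := by
        rw [EuclideanSpace.norm_eq]
        have hsum : (∑ i, ‖w' i‖ ^ 2) ≤ (n : ℝ) * ρ ^ 2 := by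
          calc (∑ i, ‖w' i‖ ^ 2) ≤ ∑ _i : Fin n, ρ ^ 2 := by
                apply Finset.sum_le_sum; intro i _
                have h := (hcomp i).trans hdist.le
                have h0 : (0:ℝ) ≤ |w' i| := abs_nonneg _
                rw [Real.norm_eq_abs]
                nlinarith
            _ = (n : ℝ) * ρ ^ 2 := by simp [Finset.sum_const]
        calc Real.sqrt (∑ i, ‖w' i‖ ^ 2) ≤ Real.sqrt ((n:ℝ) * ρ ^ 2) := Real.sqrt_le_sqrt hsum
          _ = Real.sqrt n * ρ := by
              rw [Real.sqrt_mul (by positivity), Real.sqrt_sq hρpos.le]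
      have hfinal : Real.sqrt n * ρ < s / 4 := by
        rw [hρ]
        have hlt : Real.sqrt n / (Real.sqrt n + 1) < 1 := by
          rw [div_lt_one hsq]; linarith
        calc Real.sqrt n * (s / 4 / (Real.sqrt n + 1))
            = (s / 4) * (Real.sqrt n / (Real.sqrt n + 1)) := by ring
          _ < (s / 4) * 1 := by
              apply mul_lt_mul_of_pos_left hlt (by positivity)
          _ = s / 4 := mul_one _
      linarith
    set w : ↥Ko := J.symm w' with hwdef
    have hwnormeq : ‖(w : Euc n)‖ = ‖w'‖ := by
      rw [show ‖(w : Euc n)‖ = ‖w‖ from rfl, hwdef, LinearIsometryEquiv.norm_map]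
    have hwnorm : ‖(w : Euc n)‖ < s / 4 := by rw [hwnormeq]; exact hw'norm
    have hworth : ⟪e, (w : Euc n)⟫ = 0 := by
      have hw2 : (w : Euc n) ∈ (Submodule.span ℝ {e})ᗮ := w.2
      exact (Submodule.mem_orthogonal _ _).1 hw2 e (Submodule.mem_span_singleton_self e)
    set f : ℝ → ℝ := fun τ => Metric.infDist (p + (s + τ) • e + (w : Euc n)) M with hf
    have hfc : Continuous f := by
      apply (Metric.continuous_infDist_pt M).comp
      have hc : Continuous fun τ : ℝ => (s + τ) • e :=
        (continuous_const.add continuous_id).smul continuous_const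
      exact (continuous_const.add hc).add continuous_const
    have hq_dist_p : ∀ τ : ℝ, dist (p + (s + τ) • e + (w:Euc n)) p
        = Real.sqrt ((s+τ)^2 + ‖(w:Euc n)‖^2) := by
      intro τ
      rw [dist_eq_norm]
      have hq : p + (s + τ) • e + (w:Euc n) - p = (s+τ) • e + (w:Euc n) := by abel
      rw [hq, norm_orth he hworth]
    have hq_dist_x : ∀ τ : ℝ, dist (p + (s + τ) • e + (w:Euc n)) x
        = Real.sqrt ((s+τ-r)^2 + ‖(w:Euc n)‖^2) := by
      intro τ
      rw [dist_eq_norm]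
      have hq : p + (s + τ) • e + (w:Euc n) - x = (s+τ-r) • e + (w:Euc n) := by
        rw [hre, sub_smul]
        abel
      rw [hq, norm_orth he hworth]
    have hw2 : ‖(w:Euc n)‖^2 ≤ (s/4)^2 := by nlinarith [norm_nonneg (w:Euc n)]
    have hlow : f (-(s/2)) ≤ s := by
      calc f (-(s/2)) ≤ dist (p + (s + -(s/2)) • e + (w:Euc n)) p :=
            Metric.infDist_le_dist_of_mem hpM
        _ = Real.sqrt ((s + -(s/2))^2 + ‖(w:Euc n)‖^2) := hq_dist_p _
        _ ≤ Real.sqrt (s^2) := Real.sqrt_le_sqrt (by nlinarith)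
        _ = s := Real.sqrt_sq hs.le
    have hhigh : s ≤ f (s/2) := by
      have h1 : Metric.infDist x M ≤ f (s/2) + dist x (p + (s + s/2) • e + (w:Euc n)) :=
        Metric.infDist_le_infDist_add_dist
      have h2 : dist x (p + (s + s/2) • e + (w:Euc n))
          = Real.sqrt ((s+s/2-r)^2 + ‖(w:Euc n)‖^2) := by
        rw [dist_comm]; exact hq_dist_x _
      have h3 : Real.sqrt ((s+s/2-r)^2 + ‖(w:Euc n)‖^2) ≤ r - s := by
        calc Real.sqrt ((s+s/2-r)^2 + ‖(w:Euc n)‖^2) ≤ Real.sqrt ((r-s)^2) :=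
              Real.sqrt_le_sqrt (by nlinarith)
          _ = r - s := Real.sqrt_sq (by linarith)
      rw [← hr] at h1
      rw [h2] at h1
      linarith
    obtain ⟨τ, hτmem, hτ⟩ :=
      intermediate_value_Icc (by linarith : -(s/2) ≤ s/2) hfc.continuousOn ⟨hlow, hhigh⟩
    obtain ⟨hτ1, hτ2⟩ := hτmem
    refine ⟨p + (s + τ) • e + (w : Euc n), ⟨hτ, ?_⟩, ?_⟩
    · rw [Metric.mem_closedBall, hq_dist_x]
      calc Real.sqrt ((s + τ - r)^2 + ‖(w:Euc n)‖^2) ≤ Real.sqrt ((4*s)^2) :=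
            Real.sqrt_le_sqrt (by nlinarith)
        _ = 4 * s := Real.sqrt_sq (by linarith)
    · have e2 : P z = P p := by
        rw [hz]
        simp [map_add, _root_.map_smul, hPe]
      have e1 : P (p + (s + τ) • e + (w : Euc n)) = P z + w := by
        rw [e2]
        simp [map_add, _root_.map_smul, hPe, Submodule.orthogonalProjectionOnto_mem_subspace_eq_self w]
        exact Submodule.orthogonalProjectionOnto_mem_subspace_eq_self w
      show (WithLp.equiv 2 (Fin n → ℝ)) (J (P _)) = y
      rw [e1, map_add, hwdef, LinearIsometryEquiv.apply_symm_apply, hw']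
      have : J (P z) + ((WithLp.equiv 2 (Fin n → ℝ)).symm y - J (P z))
          = (WithLp.equiv 2 (Fin n → ℝ)).symm y := by abel
      rw [this, Equiv.apply_symm_apply]
  -- measure chain
  have h1 : volume (ball (Φ z) ρ) ≤ volume (Φ '' S) := measure_mono key
  have h2 : volume (ball (Φ z) ρ) = ENNReal.ofReal ((2 * ρ) ^ n) := by
    rw [Real.volume_pi_ball _ hρpos, Fintype.card_fin]
  have hvol : (volume : Measure (Fin n → ℝ)) = μH[(n:ℝ)] := by
    have := (hausdorffMeasure_pi_real (ι := Fin n)).symm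
    simpa using this
  have h3 : volume (Φ '' S) ≤ μH[(n : ℝ)] S := by
    rw [hvol]
    have := hΦlip.hausdorffMeasure_image_le (by positivity : (0:ℝ) ≤ (n:ℝ)) S
    simpa using this
  have h4 : c1 n * s ^ n = (2 * ρ) ^ n := by
    rw [c1, hρ, ← mul_pow]
    congr 1
    field_simp
    ring
  calc ENNReal.ofReal (c1 n * s ^ n) = ENNReal.ofReal ((2*ρ)^n) := by rw [h4]
    _ = volume (ball (Φ z) ρ) := h2.symm
    _ ≤ volume (Φ '' S) := h1
    _ ≤ μH[(n : ℝ)] S := h3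


lemma level_bound (n : ℕ) {M : Set (Euc n)} (hMne : M.Nonempty) (hM : IsCompact M)
    {s : ℝ} (hs : 0 < s) :
    volume {x : Euc n | Metric.infDist x M ∈ Ioc (2*s) (3*s)} * ENNReal.ofReal (c1 n * s ^ n)
      ≤ ENNReal.ofReal ((8*s) ^ (n+1)) * volume (Metric.ball (0 : Euc n) 1)
          * μH[(n : ℝ)] {y : Euc n | Metric.infDist y M = s} := by
  set L := {y : Euc n | Metric.infDist y M = s} with hLdef
  set T := {x : Euc n | Metric.infDist x M ∈ Ioc (2*s) (3*s)} with hT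
  have hLmeas : MeasurableSet L :=
    (isClosed_singleton.preimage (Metric.continuous_infDist_pt M)).measurableSet
  obtain ⟨u, huT, hdisj, hcov⟩ := Vitali.exists_disjoint_subfamily_covering_enlargement
    (fun x : Euc n => Metric.closedBall x (4*s)) T (fun _ => 4*s) 2 one_lt_two
    (fun _ _ => by positivity) (4*s) (fun _ _ => le_rfl)
    (fun a _ => ⟨a, Metric.mem_closedBall_self (by positivity)⟩)
  have hucnt : u.Countable := by
    apply Set.PairwiseDisjoint.countable_of_nonempty_interior hdisj
    intro i _
    rw [interior_closedBall _ (by positivity : (4*s) ≠ 0)]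
    exact ⟨i, Metric.mem_ball_self (by positivity)⟩
  have hTsub : T ⊆ ⋃ b ∈ u, Metric.closedBall b (8*s) := by
    intro a ha
    obtain ⟨b, hbu, hint, -⟩ := hcov a ha
    obtain ⟨y, hy1, hy2⟩ := hint
    refine Set.mem_iUnion₂.2 ⟨b, hbu, ?_⟩
    rw [Metric.mem_closedBall]
    calc dist a b ≤ dist a y + dist y b := dist_triangle a y b
      _ ≤ 4*s + 4*s := by
          apply add_le_add
          · exact Metric.mem_closedBall'.1 hy1
          · exact Metric.mem_closedBall.1 hy2
      _ = 8*s := by ring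
  have hvol : volume T ≤
      ∑' _b : u, ENNReal.ofReal ((8*s)^(n+1)) * volume (Metric.ball (0 : Euc n) 1) := by
    calc volume T ≤ volume (⋃ b ∈ u, Metric.closedBall b (8*s)) := measure_mono hTsub
      _ ≤ ∑' b : u, volume (Metric.closedBall (b : Euc n) (8*s)) := measure_biUnion_le _ hucnt _
      _ = ∑' _b : u, ENNReal.ofReal ((8*s)^(n+1)) * volume (Metric.ball (0:Euc n) 1) := by
          congr 1; funext b
          rw [Measure.addHaar_closedBall volume _ (by positivity)]
          congr 2
          simp
  have hsum : (∑' _b : u, ENNReal.ofReal (c1 n * s^n)) ≤ μH[(n : ℝ)] L := by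
    calc (∑' b : u, ENNReal.ofReal (c1 n * s^n))
        ≤ ∑' b : u, μH[(n:ℝ)] (L ∩ Metric.closedBall (b:Euc n) (4*s)) := by
          apply ENNReal.tsum_le_tsum
          intro b
          have hb := huT b.2
          exact density n hMne hM hs hb.1 hb.2
      _ = μH[(n:ℝ)] (⋃ b ∈ u, L ∩ Metric.closedBall b (4*s)) := by
          rw [measure_biUnion hucnt
            (hdisj.mono (fun b => inter_subset_right))
            (fun b _ => hLmeas.inter measurableSet_closedBall)]
      _ ≤ μH[(n:ℝ)] L := by
          apply measure_mono
          intro y hy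
          simp only [Set.mem_iUnion] at hy
          obtain ⟨b, _, hyb, -⟩ := hy
          exact hyb
  calc volume T * ENNReal.ofReal (c1 n * s^n)
      ≤ (∑' _b : u, ENNReal.ofReal ((8*s)^(n+1)) * volume (Metric.ball (0:Euc n) 1))
          * ENNReal.ofReal (c1 n * s^n) := mul_le_mul_left hvol _
    _ = ENNReal.ofReal ((8*s)^(n+1)) * volume (Metric.ball (0:Euc n) 1)
          * ∑' _b : u, ENNReal.ofReal (c1 n * s^n) := by
        rw [← ENNReal.tsum_mul_right, ENNReal.tsum_mul_left]
    _ ≤ ENNReal.ofReal ((8*s)^(n+1)) * volume (Metric.ball (0:Euc n) 1) * μH[(n:ℝ)] L :=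
        mul_le_mul_right hsum _


lemma shell_vol (n : ℕ) {M : Set (Euc n)} (hMne : M.Nonempty) (hM : IsCompact M)
    {A s : ℝ} (hA : 0 < A) (hs : 0 < s)
    (hH : μH[(n:ℝ)] {y : Euc n | Metric.infDist y M = s} ≤ ENNReal.ofReal (A * max 1 (s^n))) :
    volume {x : Euc n | Metric.infDist x M ∈ Ioc (2*s) (3*s)}
      ≤ ENNReal.ofReal (K2 n * A * max 1 (s^n) * s) := by
  have h1 := level_bound n hMne hM hs
  have h2 : volume {x : Euc n | Metric.infDist x M ∈ Ioc (2*s) (3*s)}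
      * ENNReal.ofReal (c1 n * s ^ n)
      ≤ ENNReal.ofReal ((8*s) ^ (n+1) * v1 n * (A * max 1 (s^n))) := by
    calc volume {x : Euc n | Metric.infDist x M ∈ Ioc (2*s) (3*s)}
        * ENNReal.ofReal (c1 n * s ^ n)
        ≤ ENNReal.ofReal ((8*s) ^ (n+1)) * volume (Metric.ball (0 : Euc n) 1)
            * μH[(n : ℝ)] {y : Euc n | Metric.infDist y M = s} := h1
      _ ≤ ENNReal.ofReal ((8*s) ^ (n+1)) * ENNReal.ofReal (v1 n)
            * ENNReal.ofReal (A * max 1 (s^n)) := by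
          rw [v1_eq]
          exact mul_le_mul_right hH _
      _ = ENNReal.ofReal ((8*s) ^ (n+1) * v1 n * (A * max 1 (s^n))) := by
          rw [← ENNReal.ofReal_mul (by positivity : (0:ℝ) ≤ (8*s)^(n+1)),
            ← ENNReal.ofReal_mul (mul_nonneg (by positivity) (v1_pos n).le)]
  have hc : (0:ℝ) < c1 n * s ^ n := by
    have := c1_pos n; positivity
  have h3 : volume {x : Euc n | Metric.infDist x M ∈ Ioc (2*s) (3*s)}
      ≤ ENNReal.ofReal ((8*s) ^ (n+1) * v1 n * (A * max 1 (s^n))) / ENNReal.ofReal (c1 n * s ^ n) := by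
    rw [ENNReal.le_div_iff_mul_le (Or.inl (by simp [hc])) (Or.inl ENNReal.ofReal_ne_top)]
    exact h2
  calc volume {x : Euc n | Metric.infDist x M ∈ Ioc (2*s) (3*s)}
      ≤ ENNReal.ofReal ((8*s) ^ (n+1) * v1 n * (A * max 1 (s^n))) / ENNReal.ofReal (c1 n * s ^ n) := h3
    _ = ENNReal.ofReal ((8*s) ^ (n+1) * v1 n * (A * max 1 (s^n)) / (c1 n * s ^ n)) :=
        (ENNReal.ofReal_div_of_pos hc).symm
    _ = ENNReal.ofReal (K2 n * A * max 1 (s^n) * s) := by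
        congr 1
        rw [K2, mul_pow, pow_succ]
        field_simp [hs.ne', (c1_pos n).ne']
        ring

lemma exp_poly (n : ℕ) {s t : ℝ} (hs : 0 < s) (ht : 0 < t) (ht1 : t < 1) :
    max 1 (s^n) * Real.exp (-(4*s^2) / (3*t))
      ≤ (1 + (2*(n:ℝ)+2)^n) * Real.exp (-(2/(3*t)) * s^2) := by
  have h3t : (0:ℝ) < 3 * t := by linarith
  have hKn1 : (1:ℝ) ≤ (2*(n:ℝ)+2)^n := one_le_pow₀ (by have := Nat.cast_nonneg (α := ℝ) n; linarith)
  have hmax : max 1 (s^n) ≤ 1 + s^n := by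
    apply max_le
    · nlinarith [pow_pos hs n]
    · nlinarith
  have key : s^n ≤ (2*(n:ℝ)+2)^n * Real.exp (2/(3*t) * s^2) := by
    have hexp1 : Real.exp (2/3 * s^2) ≤ Real.exp (2/(3*t) * s^2) := by
      apply Real.exp_le_exp.2
      rw [div_mul_eq_mul_div, div_mul_eq_mul_div, div_le_div_iff₀ (by norm_num) h3t]
      nlinarith
    have hmain : s^n ≤ (2*(n:ℝ)+2)^n * Real.exp (2/3 * s^2) := by
      rcases le_or_gt s (2*(n:ℝ)+2) with hle | hgt
      · calc s^n ≤ (2*(n:ℝ)+2)^n := pow_le_pow_left₀ hs.le hle n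
          _ ≤ (2*(n:ℝ)+2)^n * Real.exp (2/3 * s^2) := by
              nlinarith [Real.one_le_exp (by positivity : (0:ℝ) ≤ 2/3 * s^2), pow_pos (by positivity : (0:ℝ) < 2*(n:ℝ)+2) n]
      · have h1 : s ≤ Real.exp s := by
          have := Real.add_one_le_exp s; linarith
        have h2 : s^n ≤ Real.exp ((n:ℝ) * s) := by
          calc s^n ≤ (Real.exp s)^n := pow_le_pow_left₀ hs.le h1 n
            _ = Real.exp ((n:ℝ) * s) := by
                rw [← Real.exp_nat_mul]
        have h3 : (n:ℝ) * s ≤ 2/3 * s^2 := by nlinarith [Nat.cast_nonneg (α := ℝ) n]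
        calc s^n ≤ Real.exp ((n:ℝ) * s) := h2
          _ ≤ Real.exp (2/3 * s^2) := Real.exp_le_exp.2 h3
          _ ≤ (2*(n:ℝ)+2)^n * Real.exp (2/3 * s^2) := by
              nlinarith [Real.exp_pos (2/3 * s^2)]
    calc s^n ≤ (2*(n:ℝ)+2)^n * Real.exp (2/3 * s^2) := hmain
      _ ≤ (2*(n:ℝ)+2)^n * Real.exp (2/(3*t) * s^2) := by
          nlinarith [Real.exp_pos (2/3 * s^2)]
  have hsplit : -(4*s^2) / (3*t) = -(2/(3*t) * s^2) + -(2/(3*t) * s^2) := by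
    field_simp; ring
  have hexp_eq : Real.exp (-(4*s^2) / (3*t))
      = Real.exp (-(2/(3*t) * s^2)) * Real.exp (-(2/(3*t) * s^2)) := by
    rw [hsplit, Real.exp_add]
  have hle1 : Real.exp (-(2/(3*t) * s^2)) ≤ 1 := by
    apply Real.exp_le_one_iff.2
    have : (0:ℝ) ≤ 2/(3*t) * s^2 := by positivity
    linarith
  have hsn : s^n * Real.exp (-(2/(3*t) * s^2)) ≤ (2*(n:ℝ)+2)^n := by
    have h := mul_le_mul_of_nonneg_right key (Real.exp_pos (-(2/(3*t) * s^2))).le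
    calc s^n * Real.exp (-(2/(3*t) * s^2))
        ≤ (2*(n:ℝ)+2)^n * Real.exp (2/(3*t) * s^2) * Real.exp (-(2/(3*t) * s^2)) := h
      _ = (2*(n:ℝ)+2)^n := by
          rw [mul_assoc, ← Real.exp_add]
          simp
  have hfin : (1 + s^n) * Real.exp (-(4*s^2) / (3*t))
      ≤ (1 + (2*(n:ℝ)+2)^n) * Real.exp (-(2/(3*t) * s^2)) := by
    rw [hexp_eq]
    have e1 : (0:ℝ) < Real.exp (-(2/(3*t) * s^2)) := Real.exp_pos _
    nlinarith [pow_pos hs n]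
  calc max 1 (s^n) * Real.exp (-(4*s^2) / (3*t))
      ≤ (1 + s^n) * Real.exp (-(4*s^2) / (3*t)) := by
        apply mul_le_mul_of_nonneg_right hmax (Real.exp_pos _).le
    _ ≤ (1 + (2*(n:ℝ)+2)^n) * Real.exp (-(2/(3*t) * s^2)) := hfin
    _ = (1 + (2*(n:ℝ)+2)^n) * Real.exp (-(2/(3*t)) * s^2) := by ring_nf

def Cfin (n : ℕ) : ℝ := 3 * K2 n * (1 + (2*(n:ℝ)+2)^n) * Real.sqrt (3*Real.pi/2)

lemma Cfin_pos (n : ℕ) : 0 < Cfin n := by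
  have h1 := K2_pos n
  have h2 : (0:ℝ) < 1 + (2*(n:ℝ)+2)^n := by positivity
  have hpi := Real.pi_pos
  have h3 : (0:ℝ) < Real.sqrt (3*Real.pi/2) := Real.sqrt_pos.2 (by linarith)
  have : (0:ℝ) < 3 * K2 n := by linarith
  calc (0:ℝ) < (3 * K2 n) * ((1 + (2*(n:ℝ)+2)^n) * Real.sqrt (3*Real.pi/2)) := by
        exact mul_pos this (mul_pos h2 h3)
    _ = Cfin n := by rw [Cfin]; ring

theorem main (n : ℕ) :
    ∃ C > 0, ∀ (M : Set (Euc n)) (A : ℝ), M.Nonempty → IsCompact M → 0 < A →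
      (∀ᵐ s ∂(volume.restrict (Ioi (0 : ℝ))),
        μH[(n : ℝ)] {x : Euc n | Metric.infDist x M = s}
          ≤ ENNReal.ofReal (A * max 1 (s ^ n))) →
      ∀ t : ℝ, 0 < t → t < 1 →
        ∫⁻ x in Mᶜ,
            ENNReal.ofReal (t⁻¹ * Real.exp (-(Metric.infDist x M) ^ 2 / (3 * t)))
          ≤ ENNReal.ofReal (C * A / Real.sqrt t) := by
  refine ⟨Cfin n, Cfin_pos n, ?_⟩
  intro M A hMne hM hA hae t ht ht1
  set ψ : ℝ → ℝ := fun s => 3 * s⁻¹ * (t⁻¹ * Real.exp (-(4*s^2) / (3*t))) with hψdef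
  set Q : Set (Euc n × ℝ) :=
    {p | 2*p.2 < Metric.infDist p.1 M ∧ Metric.infDist p.1 M ≤ 3*p.2} with hQdef
  set F : Euc n × ℝ → ℝ≥0∞ := Q.indicator (fun p => ENNReal.ofReal (ψ p.2)) with hFdef
  have hdmeas : Measurable fun p : Euc n × ℝ => Metric.infDist p.1 M :=
    (Metric.continuous_infDist_pt M).measurable.comp measurable_fst
  have hQM : MeasurableSet Q := by
    have h1 : MeasurableSet {p : Euc n × ℝ | 2*p.2 < Metric.infDist p.1 M} :=
      measurableSet_lt (measurable_snd.const_mul 2) hdmeas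
    have h2 : MeasurableSet {p : Euc n × ℝ | Metric.infDist p.1 M ≤ 3*p.2} :=
      measurableSet_le hdmeas (measurable_snd.const_mul 3)
    exact h1.inter h2
  have hψmeas : Measurable ψ := by
    have hcont : Continuous fun s : ℝ => t⁻¹ * Real.exp (-(4*s^2) / (3*t)) := by
      apply continuous_const.mul
      apply Real.continuous_exp.comp
      apply Continuous.div_const
      continuity
    exact (measurable_const.mul measurable_inv).mul hcont.measurable
  have hFmeas : Measurable F :=
    Measurable.indicator (ENNReal.measurable_ofReal.comp (hψmeas.comp measurable_snd)) hQM
  -- pointwise lower bound by disintegration over levels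
  have hpt : ∀ x ∈ Mᶜ, ENNReal.ofReal (t⁻¹ * Real.exp (-(Metric.infDist x M)^2 / (3*t)))
      ≤ ∫⁻ s in Ioi (0:ℝ), F (x, s) := by
    intro x hx
    set u := Metric.infDist x M with hu
    have hupos : 0 < u := (hM.isClosed.notMem_iff_infDist_pos hMne).1 hx
    have hIcoSub : Ico (u/3) (u/2) ⊆ Ioi (0:ℝ) := by
      intro s hs
      exact lt_of_lt_of_le (by positivity) hs.1
    have hsub : ∀ s : ℝ, (Ico (u/3) (u/2)).indicator
        (fun _ => ENNReal.ofReal (6 * u⁻¹ * (t⁻¹ * Real.exp (-u^2 / (3*t))))) s ≤ F (x, s) := by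
      intro s
      by_cases hsmem : s ∈ Ico (u/3) (u/2)
      · rw [Set.indicator_of_mem hsmem]
        obtain ⟨hs1, hs2⟩ := hsmem
        have hspos : 0 < s := lt_of_lt_of_le (by positivity) hs1
        have hxQ : (x, s) ∈ Q := ⟨by simp only; linarith, by simp only; linarith⟩
        rw [hFdef, Set.indicator_of_mem hxQ]
        apply ENNReal.ofReal_le_ofReal
        have h3t : (0:ℝ) < 3*t := by linarith
        have hexp : Real.exp (-u^2 / (3*t)) ≤ Real.exp (-(4*s^2) / (3*t)) := by
          apply Real.exp_le_exp.2
          rw [div_le_div_iff₀ h3t h3t]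
          have h4 : 4*s^2 ≤ u^2 := by nlinarith
          have h5 : -u^2 ≤ -(4*s^2) := by linarith
          exact mul_le_mul_of_nonneg_right h5 h3t.le
        have hinv : 2 * u⁻¹ ≤ s⁻¹ := by
          rw [show (2:ℝ) * u⁻¹ = (u/2)⁻¹ by field_simp]
          exact inv_anti₀ hspos hs2.le
        have h6 : 6 * u⁻¹ ≤ 3 * s⁻¹ := by linarith
        have hE1 : t⁻¹ * Real.exp (-u^2 / (3*t)) ≤ t⁻¹ * Real.exp (-(4*s^2) / (3*t)) :=
          mul_le_mul_of_nonneg_left hexp (inv_nonneg.2 ht.le)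
        have hE1nn : (0:ℝ) ≤ t⁻¹ * Real.exp (-u^2 / (3*t)) := by positivity
        exact mul_le_mul h6 hE1 hE1nn (by positivity)
      · rw [Set.indicator_of_notMem hsmem]; exact zero_le
    have hIcoVol : (volume.restrict (Ioi (0:ℝ))) (Ico (u/3) (u/2)) = ENNReal.ofReal (u/6) := by
      rw [Measure.restrict_apply measurableSet_Ico,
        Set.inter_eq_self_of_subset_left hIcoSub, Real.volume_Ico]
      congr 1; ring
    calc ENNReal.ofReal (t⁻¹ * Real.exp (-u^2 / (3*t)))
        = ENNReal.ofReal (6 * u⁻¹ * (t⁻¹ * Real.exp (-u^2 / (3*t)))) * ENNReal.ofReal (u/6) := by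
          rw [← ENNReal.ofReal_mul (by positivity)]
          congr 1
          field_simp
      _ = ∫⁻ s in Ioi (0:ℝ), (Ico (u/3) (u/2)).indicator
            (fun _ => ENNReal.ofReal (6 * u⁻¹ * (t⁻¹ * Real.exp (-u^2 / (3*t))))) s := by
          rw [lintegral_indicator measurableSet_Ico, setLIntegral_const, hIcoVol]
      _ ≤ ∫⁻ s in Ioi (0:ℝ), F (x, s) := lintegral_mono hsub
  have hmcomp : MeasurableSet (Mᶜ) := hM.isClosed.measurableSet.compl
  have hswap : ∫⁻ x in Mᶜ, ∫⁻ s in Ioi (0:ℝ), F (x, s)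
      = ∫⁻ s in Ioi (0:ℝ), ∫⁻ x in Mᶜ, F (x, s) := by
    apply lintegral_lintegral_swap
    exact (hFmeas.comp (measurable_fst.prodMk measurable_snd)).aemeasurable
  set c0 := 3 * K2 n * A * (1 + (2*(n:ℝ)+2)^n) * t⁻¹ with hc0
  have hc0nn : 0 ≤ c0 := by
    have h4 : (0:ℝ) ≤ 3 * K2 n := by have := (K2_pos n).le; linarith
    have h5 : (0:ℝ) ≤ 3 * K2 n * A := mul_nonneg h4 hA.le
    have h6 : (0:ℝ) ≤ 3 * K2 n * A * (1 + (2*(n:ℝ)+2)^n) := mul_nonneg h5 (by positivity)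
    exact mul_nonneg h6 (inv_nonneg.2 ht.le)
  have hinner : ∀ᵐ s ∂(volume.restrict (Ioi (0:ℝ))),
      (∫⁻ x in Mᶜ, F (x, s)) ≤ ENNReal.ofReal (c0 * Real.exp (-(2/(3*t)) * s^2)) := by
    filter_upwards [hae, ae_restrict_mem measurableSet_Ioi] with s hsH hs0
    have hs0' : (0:ℝ) < s := hs0
    set T := {x : Euc n | Metric.infDist x M ∈ Ioc (2*s) (3*s)} with hTdef
    have hTmeas : MeasurableSet T := by
      have h1 : MeasurableSet {x : Euc n | 2*s < Metric.infDist x M} :=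
        measurableSet_lt measurable_const (Metric.continuous_infDist_pt M).measurable
      have h2 : MeasurableSet {x : Euc n | Metric.infDist x M ≤ 3*s} :=
        measurableSet_le (Metric.continuous_infDist_pt M).measurable measurable_const
      exact h1.inter h2
    have hFx : ∀ x : Euc n, F (x, s) = T.indicator (fun _ => ENNReal.ofReal (ψ s)) x := by
      intro x
      by_cases hxT : x ∈ T
      · have hxT' := hxT
        rw [hTdef, Set.mem_setOf_eq, Set.mem_Ioc] at hxT'
        have hxQ : (x, s) ∈ Q := ⟨hxT'.1, hxT'.2⟩
        rw [hFdef, Set.indicator_of_mem hxQ, Set.indicator_of_mem hxT]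
      · have hxQ : (x, s) ∉ Q := by
          intro h
          exact hxT (by rw [hTdef, Set.mem_setOf_eq, Set.mem_Ioc]; exact ⟨h.1, h.2⟩)
        rw [hFdef, Set.indicator_of_notMem hxQ, Set.indicator_of_notMem hxT]
    have hTsubM : T ⊆ Mᶜ := by
      intro y hy
      intro hyM
      have h0 : Metric.infDist y M = 0 := Metric.infDist_zero_of_mem hyM
      have h1 : 2*s < Metric.infDist y M := hy.1
      rw [h0] at h1
      linarith
    have hψnn : 0 ≤ ψ s := by
      rw [hψdef]
      have : (0:ℝ) ≤ 3 * s⁻¹ := by positivity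
      positivity
    have hcalc : (∫⁻ x in Mᶜ, F (x, s)) = ENNReal.ofReal (ψ s) * volume T := by
      calc (∫⁻ x in Mᶜ, F (x, s))
          = ∫⁻ x in Mᶜ, T.indicator (fun _ => ENNReal.ofReal (ψ s)) x := lintegral_congr hFx
        _ = ENNReal.ofReal (ψ s) * (volume.restrict Mᶜ) T := by
            rw [lintegral_indicator hTmeas, setLIntegral_const]
        _ = ENNReal.ofReal (ψ s) * volume T := by
            rw [Measure.restrict_apply' hmcomp, Set.inter_eq_self_of_subset_left hTsubM]
    rw [hcalc]
    have hTvol := shell_vol n hMne hM hA hs0' hsH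
    calc ENNReal.ofReal (ψ s) * volume T
        ≤ ENNReal.ofReal (ψ s) * ENNReal.ofReal (K2 n * A * max 1 (s^n) * s) :=
          mul_le_mul_right hTvol _
      _ = ENNReal.ofReal (ψ s * (K2 n * A * max 1 (s^n) * s)) :=
          (ENNReal.ofReal_mul hψnn).symm
      _ ≤ ENNReal.ofReal (c0 * Real.exp (-(2/(3*t)) * s^2)) := by
          apply ENNReal.ofReal_le_ofReal
          have h1 : ψ s * (K2 n * A * max 1 (s^n) * s)
              = 3 * K2 n * A * t⁻¹ * (max 1 (s^n) * Real.exp (-(4*s^2) / (3*t))) * (s * s⁻¹) := by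
            rw [hψdef]; ring
          rw [h1, mul_inv_cancel₀ hs0'.ne', mul_one]
          have h2 := exp_poly n hs0' ht ht1
          have h3 : (0:ℝ) ≤ 3 * K2 n * A * t⁻¹ := by
            have h4 : (0:ℝ) ≤ 3 * K2 n := by have := (K2_pos n).le; linarith
            exact mul_nonneg (mul_nonneg h4 hA.le) (inv_nonneg.2 ht.le)
          calc 3 * K2 n * A * t⁻¹ * (max 1 (s^n) * Real.exp (-(4*s^2) / (3*t)))
              ≤ 3 * K2 n * A * t⁻¹ * ((1 + (2*(n:ℝ)+2)^n) * Real.exp (-(2/(3*t)) * s^2)) :=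
                mul_le_mul_of_nonneg_left h2 h3
            _ = c0 * Real.exp (-(2/(3*t)) * s^2) := by rw [hc0]; ring
  have hb : (0:ℝ) < 2/(3*t) := by positivity
  have hint : Integrable (fun s : ℝ => c0 * Real.exp (-(2/(3*t)) * s^2)) :=
    (integrable_exp_neg_mul_sq hb).const_mul c0
  have hfinal : ∫⁻ s in Ioi (0:ℝ), ENNReal.ofReal (c0 * Real.exp (-(2/(3*t)) * s^2))
      ≤ ENNReal.ofReal (Cfin n * A / Real.sqrt t) := by
    have hsq : Real.sqrt t ≠ 0 := (Real.sqrt_pos.2 ht).ne'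
    have hpi := Real.pi_pos
    calc ∫⁻ s in Ioi (0:ℝ), ENNReal.ofReal (c0 * Real.exp (-(2/(3*t)) * s^2))
        ≤ ∫⁻ s : ℝ, ENNReal.ofReal (c0 * Real.exp (-(2/(3*t)) * s^2)) :=
          lintegral_mono' Measure.restrict_le_self le_rfl
      _ = ENNReal.ofReal (∫ s : ℝ, c0 * Real.exp (-(2/(3*t)) * s^2)) :=
          (ofReal_integral_eq_lintegral_ofReal hint
            (Filter.Eventually.of_forall fun s => by positivity)).symm
      _ = ENNReal.ofReal (c0 * Real.sqrt (Real.pi / (2/(3*t)))) := by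
          rw [MeasureTheory.integral_const_mul, integral_gaussian]
      _ ≤ ENNReal.ofReal (Cfin n * A / Real.sqrt t) := by
          apply ENNReal.ofReal_le_ofReal
          apply le_of_eq
          have e1 : Real.pi / (2/(3*t)) = (3*Real.pi/2) * t := by field_simp
          have e2 : Real.sqrt ((3*Real.pi/2) * t)
              = Real.sqrt (3*Real.pi/2) * Real.sqrt t := Real.sqrt_mul (by linarith) t
          have e3 : t⁻¹ * Real.sqrt t = 1 / Real.sqrt t := by
            rw [eq_div_iff hsq, mul_assoc, Real.mul_self_sqrt ht.le, inv_mul_cancel₀ ht.ne']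
          calc c0 * Real.sqrt (Real.pi / (2/(3*t)))
              = (3 * K2 n * (1 + (2*(n:ℝ)+2)^n) * Real.sqrt (3*Real.pi/2)) * A
                  * (t⁻¹ * Real.sqrt t) := by rw [e1, e2, hc0]; ring
            _ = (3 * K2 n * (1 + (2*(n:ℝ)+2)^n) * Real.sqrt (3*Real.pi/2)) * A
                  * (1 / Real.sqrt t) := by rw [e3]
            _ = Cfin n * A / Real.sqrt t := by rw [Cfin]; ring
  calc ∫⁻ x in Mᶜ, ENNReal.ofReal (t⁻¹ * Real.exp (-(Metric.infDist x M) ^ 2 / (3 * t)))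
      ≤ ∫⁻ x in Mᶜ, ∫⁻ s in Ioi (0:ℝ), F (x, s) := by
        apply lintegral_mono_ae
        filter_upwards [ae_restrict_mem hmcomp] with x hx
        exact hpt x hx
    _ = ∫⁻ s in Ioi (0:ℝ), ∫⁻ x in Mᶜ, F (x, s) := hswap
    _ ≤ ∫⁻ s in Ioi (0:ℝ), ENNReal.ofReal (c0 * Real.exp (-(2/(3*t)) * s^2)) :=
        lintegral_mono_ae hinner
    _ ≤ ENNReal.ofReal (Cfin n * A / Real.sqrt t) := hfinal

end Stmt18Aux
end StmtAux

theorem stmt18 (n : ℕ) :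
    ∃ C > 0, ∀ (M : Set (Euc n)) (A : ℝ), M.Nonempty → IsCompact M → 0 < A →
      (∀ᵐ s ∂(volume.restrict (Ioi (0 : ℝ))),
        μH[(n : ℝ)] {x : Euc n | Metric.infDist x M = s}
          ≤ ENNReal.ofReal (A * max 1 (s ^ n))) →
      ∀ t : ℝ, 0 < t → t < 1 →
        ∫⁻ x in Mᶜ,
            ENNReal.ofReal (t⁻¹ * Real.exp (-(Metric.infDist x M) ^ 2 / (3 * t)))
          ≤ ENNReal.ofReal (C * A / Real.sqrt t) := by
  exact Stmt18Aux.main n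

end
end
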